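/- If n ≥ 4k (with k ≥ 2 an integer), then the spectral radius of K^{k−2}_{2,n−k} equals (1/2)·√(4n − 2k − 4 + 2·√(5k² − 8kn + 4n² − 4k + 4)); equivalently, it is the largest root of x⁴ + (k − 2n + 2)x² − k² + kn + 2k − 2n = 0. -/

import Mathlib

open SimpleGraph

/-- The `l`-edge-connectivity of a graph: the minimum number of edges whose removal
leaves a graph with at least `l` connected components, if the graph has at least `l`
vertices; otherwise the number of vertices. -/
noncomputable def edgeConnL {V : Type*} (l : ℕ) (G : SimpleGraph V) : ℕ :=
  if l ≤ Nat.card V then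
    sInf {c : ℕ | ∃ F : Set (Sym2 V), F ⊆ G.edgeSet ∧ F.ncard = c ∧
      l ≤ Nat.card (G.deleteEdges F).ConnectedComponent}
  else Nat.card V

/-- A graph is minimally `(k,l)`-edge-connected if it is connected, its
`l`-edge-connectivity is at least `k`, and deleting any edge drops the
`l`-edge-connectivity below `k`. -/
def IsMinimallyKLEdgeConnected {V : Type*} (k l : ℕ) (G : SimpleGraph V) : Prop :=
  G.Connected ∧ k ≤ edgeConnL l G ∧
    ∀ e ∈ G.edgeSet, edgeConnL l (G.deleteEdges {e}) < k

/-- The real adjacency matrix of a simple graph. -/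
noncomputable def adjMat {V : Type*} (G : SimpleGraph V) : Matrix V V ℝ :=
  letI := Classical.decRel G.Adj
  G.adjMatrix ℝ

/-- The spectral radius of a graph: the largest (real) eigenvalue of its adjacency matrix. -/
noncomputable def specRad {V : Type*} [Fintype V] [DecidableEq V]
    (G : SimpleGraph V) : ℝ :=
  sSup (spectrum ℝ (adjMat G))

abbrev KbookV (p s : ℕ) : Type := (Unit ⊕ Unit) ⊕ (Fin s ⊕ Fin p)

/-- `K^{p}_{2,s}`: the graph obtained from the disjoint union of the star `K_{1,p}` and the
complete bipartite graph `K_{2,s}` by identifying the centre of the star with one of the two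
vertices of degree `s` of `K_{2,s}`.  Here `Sum.inl (Sum.inl _)` is the identified vertex,
`Sum.inl (Sum.inr _)` is the other vertex of the part of size two, `Fin s` is the part of
size `s` and `Fin p` are the pendant vertices. -/
def Kbook (p s : ℕ) : SimpleGraph (KbookV p s) :=
  SimpleGraph.fromRel (fun a b =>
    match a, b with
    | Sum.inl (Sum.inl _), Sum.inr _ => True
    | Sum.inl (Sum.inr _), Sum.inr (Sum.inl _) => True
    | _, _ => False)

/-- If `n ≥ 4k` (with `k ≥ 2`), then the spectral radius of `K^{k−2}_{2,n−k}` equals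
`√(4n − 2k − 4 + 2√(5k² − 8kn + 4n² − 4k + 4)) / 2`; equivalently, it is the largest root
of `x⁴ + (k − 2n + 2)x² − k² + kn + 2k − 2n = 0`. -/

/- ### Auxiliary development -/


theorem mem_spec_iff {V : Type*} [Fintype V] [DecidableEq V] (A : Matrix V V ℝ) (μ : ℝ) :
    μ ∈ spectrum ℝ A ↔ ∃ v ≠ 0, A.mulVec v = μ • v := by
  rw [spectrum.mem_iff, Matrix.isUnit_iff_isUnit_det, isUnit_iff_ne_zero, not_ne_iff,
    ← Matrix.exists_mulVec_eq_zero_iff]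
  have h2 : ∀ v : V → ℝ, (algebraMap ℝ (Matrix V V ℝ) μ).mulVec v = μ • v := by
    intro v
    simp [Matrix.algebraMap_eq_diagonal, Pi.algebraMap_def, Algebra.algebraMap_self_apply]
  constructor
  · rintro ⟨v, hv, h⟩
    rw [Matrix.sub_mulVec, h2, sub_eq_zero] at h
    exact ⟨v, hv, h.symm⟩
  · rintro ⟨v, hv, h⟩
    exact ⟨v, hv, by rw [Matrix.sub_mulVec, h2, h, sub_self]⟩

open scoped Classical in
theorem adjMat_mulVec_apply {V : Type*} [Fintype V] (G : SimpleGraph V)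
    (x : V → ℝ) (w : V) :
    (adjMat G).mulVec x w = ∑ v, (if G.Adj w v then (1:ℝ) else 0) * x v := by
  rw [Matrix.mulVec]
  congr 1

noncomputable def rho (p s : ℕ) : ℝ :=
  Real.sqrt ((2 * s + p + Real.sqrt (4 * (s:ℝ)^2 + (p:ℝ)^2)) / 2)

theorem rho_nonneg (p s : ℕ) : 0 ≤ rho p s := Real.sqrt_nonneg _

theorem inner_nonneg (p s : ℕ) : 0 ≤ (2 * s + p + Real.sqrt (4 * (s:ℝ)^2 + (p:ℝ)^2)) / 2 := by
  have h1 : (0:ℝ) ≤ 2 * s + p := by positivity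
  have h2 := Real.sqrt_nonneg (4 * (s:ℝ)^2 + (p:ℝ)^2)
  linarith

theorem rho_sq (p s : ℕ) :
    (rho p s)^2 = (2 * s + p + Real.sqrt (4 * (s:ℝ)^2 + (p:ℝ)^2)) / 2 :=
  Real.sq_sqrt (inner_nonneg p s)

theorem rho_quad (p s : ℕ) :
    (rho p s)^4 - (2 * s + p) * (rho p s)^2 + s * p = 0 := by
  have h1 : Real.sqrt (4 * (s:ℝ)^2 + (p:ℝ)^2) ^ 2 = 4 * (s:ℝ)^2 + (p:ℝ)^2 :=
    Real.sq_sqrt (by positivity)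
  have h2 := rho_sq p s
  have h3 : (rho p s)^4 = ((rho p s)^2)^2 := by ring
  rw [h3, h2]
  nlinarith [h1]

theorem rho_sq_ge (p s : ℕ) : (2 * (s:ℝ) + p) / 2 ≤ (rho p s)^2 := by
  rw [rho_sq]
  have := Real.sqrt_nonneg (4 * (s:ℝ)^2 + (p:ℝ)^2)
  linarith

theorem rho_pos (p s : ℕ) (hs : 0 < s) : 0 < rho p s := by
  rw [rho, Real.sqrt_pos]
  have h2 := Real.sqrt_nonneg (4 * (s:ℝ)^2 + (p:ℝ)^2)
  have h1 : (1:ℝ) ≤ s := by exact_mod_cast hs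
  have h3 : (0:ℝ) ≤ p := Nat.cast_nonneg p
  linarith

theorem root_le (p s : ℕ) (x : ℝ)
    (hx : x^4 - (2 * s + p) * x^2 + s * p = 0) : x ≤ rho p s := by
  rcases le_or_gt x 0 with h | h
  · exact h.trans (rho_nonneg p s)
  · have hq := rho_quad p s
    have hge := rho_sq_ge p s
    have hsq : x^2 ≤ (rho p s)^2 := by nlinarith [sq_nonneg (x^2 - (rho p s)^2)]
    calc x = Real.sqrt (x^2) := (Real.sqrt_sq h.le).symm
    _ ≤ Real.sqrt ((rho p s)^2) := Real.sqrt_le_sqrt hsq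
    _ = rho p s := Real.sqrt_sq (rho_nonneg p s)

noncomputable def evec (p s : ℕ) : KbookV p s → ℝ
  | .inl (.inl _) => (rho p s)^2 - s
  | .inl (.inr _) => s
  | .inr (.inl _) => rho p s
  | .inr (.inr _) => ((rho p s)^2 - s) / rho p s

theorem isGreatest_spec (p s : ℕ) (hs : 0 < s) :
    IsGreatest (spectrum ℝ (adjMat (Kbook p s))) (rho p s) := by
  classical
  have hρ := rho_pos p s hs
  have hρne : rho p s ≠ 0 := hρ.ne'
  have hq := rho_quad p s
  have hsR : (0:ℝ) < s := by exact_mod_cast hs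
  constructor
  · rw [mem_spec_iff]
    refine ⟨evec p s, ?_, ?_⟩
    · intro h
      have := congrFun h (Sum.inl (Sum.inr ()))
      simp only [evec, Pi.zero_apply] at this
      exact hsR.ne' this
    · funext w
      rcases w with (⟨u⟩ | ⟨u⟩) | (i | j)
      · rw [adjMat_mulVec_apply, Fintype.sum_sum_type, Fintype.sum_sum_type]
        simp only [Kbook, evec, Pi.smul_apply, smul_eq_mul]
        simp [SimpleGraph.fromRel_adj, Finset.sum_const, Finset.card_univ]
        field_simp
        nlinarith [hq]
      · rw [adjMat_mulVec_apply, Fintype.sum_sum_type, Fintype.sum_sum_type]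
        simp only [Kbook, evec, Pi.smul_apply, smul_eq_mul]
        simp [SimpleGraph.fromRel_adj, Finset.sum_const, Finset.card_univ]
        ring
      · rw [adjMat_mulVec_apply, Fintype.sum_sum_type, Fintype.sum_sum_type]
        simp only [Kbook, evec, Pi.smul_apply, smul_eq_mul]
        simp [SimpleGraph.fromRel_adj]
        ring
      · rw [adjMat_mulVec_apply, Fintype.sum_sum_type, Fintype.sum_sum_type]
        simp only [Kbook, evec, Pi.smul_apply, smul_eq_mul]
        simp [SimpleGraph.fromRel_adj]
        field_simp
  · rintro ν hν
    rw [mem_spec_iff] at hν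
    obtain ⟨v, hv, hAv⟩ := hν
    set a := v (Sum.inl (Sum.inl ())) with ha
    set b := v (Sum.inl (Sum.inr ())) with hb
    set C := ∑ i : Fin s, v (Sum.inr (Sum.inl i)) with hC
    set D := ∑ j : Fin p, v (Sum.inr (Sum.inr j)) with hD
    have e1 : C + D = ν * a := by
      have := congrFun hAv (Sum.inl (Sum.inl ()))
      rw [adjMat_mulVec_apply, Fintype.sum_sum_type, Fintype.sum_sum_type] at this
      simpa [Kbook, SimpleGraph.fromRel_adj, Pi.smul_apply, smul_eq_mul, hC, hD] using this
    have e2 : C = ν * b := by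
      have := congrFun hAv (Sum.inl (Sum.inr ()))
      rw [adjMat_mulVec_apply, Fintype.sum_sum_type, Fintype.sum_sum_type] at this
      simpa [Kbook, SimpleGraph.fromRel_adj, Pi.smul_apply, smul_eq_mul, hC] using this
    have e3 : ∀ i : Fin s, a + b = ν * v (Sum.inr (Sum.inl i)) := by
      intro i
      have := congrFun hAv (Sum.inr (Sum.inl i))
      rw [adjMat_mulVec_apply, Fintype.sum_sum_type, Fintype.sum_sum_type] at this
      simpa [Kbook, SimpleGraph.fromRel_adj, Pi.smul_apply, smul_eq_mul, ha, hb] using this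
    have e4 : ∀ j : Fin p, a = ν * v (Sum.inr (Sum.inr j)) := by
      intro j
      have := congrFun hAv (Sum.inr (Sum.inr j))
      rw [adjMat_mulVec_apply, Fintype.sum_sum_type, Fintype.sum_sum_type] at this
      simpa [Kbook, SimpleGraph.fromRel_adj, Pi.smul_apply, smul_eq_mul, ha] using this
    rcases eq_or_ne ν 0 with rfl | hν0
    · exact rho_nonneg p s
    · by_cases hab : a = 0 ∧ b = 0
      · exfalso
        apply hv
        funext w
        rcases w with (⟨u⟩ | ⟨u⟩) | (i | j)
        · exact hab.1
        · exact hab.2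
        · have := e3 i
          rw [hab.1, hab.2, add_zero] at this
          exact ((mul_eq_zero.mp this.symm).resolve_left hν0)
        · have := e4 j
          rw [hab.1] at this
          exact ((mul_eq_zero.mp this.symm).resolve_left hν0)
      · -- derive the quartic
        have hCsum : ν * C = s * (a + b) := by
          rw [hC, Finset.mul_sum,
            Finset.sum_congr rfl (fun i _ => (e3 i).symm : ∀ i ∈ Finset.univ,
              ν * v (Sum.inr (Sum.inl i)) = a + b),
            Finset.sum_const, Finset.card_univ, Fintype.card_fin, nsmul_eq_mul]
        have hDsum : ν * D = p * a := by
          rw [hD, Finset.mul_sum,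
            Finset.sum_congr rfl (fun j _ => (e4 j).symm : ∀ j ∈ Finset.univ,
              ν * v (Sum.inr (Sum.inr j)) = a),
            Finset.sum_const, Finset.card_univ, Fintype.card_fin, nsmul_eq_mul]
        have h5 : ν^2 * a = (s + p) * a + s * b := by
          have := congrArg (ν * ·) e1.symm
          rw [mul_add, hCsum, hDsum] at this
          nlinarith [this]
        have h6 : ν^2 * b = s * a + s * b := by
          have := congrArg (ν * ·) e2.symm
          rw [hCsum] at this
          nlinarith [this]
        have h7 : (ν^4 - (2 * s + p) * ν^2 + s * p) * a = 0 := by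
          linear_combination (ν^2 - (s:ℝ)) * h5 + (s:ℝ) * h6
        have h8 : (ν^4 - (2 * s + p) * ν^2 + s * p) * b = 0 := by
          linear_combination (s:ℝ) * h5 + (ν^2 - (s:ℝ) - (p:ℝ)) * h6
        have hq0 : ν^4 - (2 * s + p) * ν^2 + s * p = 0 := by
          rcases not_and_or.mp hab with h | h
          · exact (mul_eq_zero.mp h7).resolve_right h
          · exact (mul_eq_zero.mp h8).resolve_right h
        exact root_le p s ν hq0

theorem spectral_radius_Kbook_order (k n : ℕ) (hk : 2 ≤ k) (hn : 4 * k ≤ n) :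
    specRad (Kbook (k - 2) (n - k)) =
      Real.sqrt (4 * (n : ℝ) - 2 * (k : ℝ) - 4 +
        2 * Real.sqrt (5 * (k : ℝ) ^ 2 - 8 * (k : ℝ) * (n : ℝ) + 4 * (n : ℝ) ^ 2
          - 4 * (k : ℝ) + 4)) / 2 ∧
    IsGreatest {x : ℝ | x ^ 4 + ((k : ℝ) - 2 * (n : ℝ) + 2) * x ^ 2 - (k : ℝ) ^ 2
        + (k : ℝ) * (n : ℝ) + 2 * (k : ℝ) - 2 * (n : ℝ) = 0}
      (specRad (Kbook (k - 2) (n - k))) := by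

  have hkn : k ≤ n := le_trans (by omega) hn
  have hs : 0 < n - k := by omega
  have hsR : ((n - k : ℕ) : ℝ) = (n : ℝ) - k := by
    rw [Nat.cast_sub hkn]
  have hpR : ((k - 2 : ℕ) : ℝ) = (k : ℝ) - 2 := by
    rw [Nat.cast_sub hk]; norm_num
  have hspec : specRad (Kbook (k - 2) (n - k)) = rho (k - 2) (n - k) :=
    (isGreatest_spec (k - 2) (n - k) hs).csSup_eq
  have hE : 5 * (k : ℝ) ^ 2 - 8 * (k : ℝ) * (n : ℝ) + 4 * (n : ℝ) ^ 2 - 4 * (k : ℝ) + 4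
      = 4 * ((n - k : ℕ) : ℝ)^2 + ((k - 2 : ℕ) : ℝ)^2 := by
    rw [hsR, hpR]; ring
  have hpoly : ∀ x : ℝ, x ^ 4 + ((k : ℝ) - 2 * (n : ℝ) + 2) * x ^ 2 - (k : ℝ) ^ 2
      + (k : ℝ) * (n : ℝ) + 2 * (k : ℝ) - 2 * (n : ℝ)
      = x^4 - (2 * ((n - k : ℕ) : ℝ) + ((k - 2 : ℕ) : ℝ)) * x^2
        + ((n - k : ℕ) : ℝ) * ((k - 2 : ℕ) : ℝ) := by
    intro x; rw [hsR, hpR]; ring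
  refine ⟨?_, ?_⟩
  · rw [hspec, rho]
    rw [← hE]
    have h4 : 4 * (n : ℝ) - 2 * (k : ℝ) - 4 +
        2 * Real.sqrt (5 * (k : ℝ) ^ 2 - 8 * (k : ℝ) * (n : ℝ) + 4 * (n : ℝ) ^ 2
          - 4 * (k : ℝ) + 4)
        = ((2 * ((n - k : ℕ) : ℝ) + ((k - 2 : ℕ) : ℝ) +
            Real.sqrt (5 * (k : ℝ) ^ 2 - 8 * (k : ℝ) * (n : ℝ) + 4 * (n : ℝ) ^ 2
          - 4 * (k : ℝ) + 4)) / 2) * 4 := by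
      rw [hsR, hpR]; ring
    rw [h4, Real.sqrt_mul (inner_nonneg _ _ |>.trans_eq (by rw [hE])), ]
    rw [show Real.sqrt 4 = 2 by
      rw [show (4:ℝ) = 2^2 by norm_num, Real.sqrt_sq (by norm_num)]]
    ring
  · rw [hspec]
    constructor
    · rw [Set.mem_setOf_eq, hpoly]
      exact rho_quad _ _
    · intro x hx
      rw [Set.mem_setOf_eq, hpoly] at hx
      exact root_le _ _ x hx
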